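/- Let A be an n×n real matrix such that Sym(A) = (A+Aᵀ)/2 is positive definite. Set κ = ‖Skew(A)‖ · ‖(Sym(A))^{-1}‖, where ‖·‖ is the spectral norm. Then det A ≤ (κ² + 1)^{n/2} ∏_{i=1}^n a_{ii}. -/

import Mathlib

open Real Matrix

/-- The operator (spectral) norm of a real matrix, induced by the Euclidean norm. -/
noncomputable def opNorm {n : ℕ} (A : Matrix (Fin n) (Fin n) ℝ) : ℝ :=
  ‖Matrix.toEuclideanCLM (𝕜 := ℝ) (n := Fin n) A‖

/-- Symmetric part of a matrix. -/
noncomputable def symPart {n : ℕ} (M : Matrix (Fin n) (Fin n) ℝ) :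
    Matrix (Fin n) (Fin n) ℝ := (2 : ℝ)⁻¹ • (M + Mᵀ)

/-- Skew-symmetric part of a matrix. -/
noncomputable def skewPart {n : ℕ} (M : Matrix (Fin n) (Fin n) ℝ) :
    Matrix (Fin n) (Fin n) ℝ := (2 : ℝ)⁻¹ • (M - Mᵀ)

open scoped Matrix.Norms.L2Operator MatrixOrder

section Aux

lemma opNorm_eq_norm {n : ℕ} (A : Matrix (Fin n) (Fin n) ℝ) : opNorm A = ‖A‖ := rfl

lemma real_conjTranspose_eq_transpose {n : ℕ} (M : Matrix (Fin n) (Fin n) ℝ) : Mᴴ = Mᵀ := by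
  ext i j; simp [Matrix.conjTranspose]

lemma dot_self_norm {n : ℕ} (x : Fin n → ℝ) :
    x ⬝ᵥ x = ‖(EuclideanSpace.equiv (Fin n) ℝ).symm x‖ ^ 2 := by
  rw [← real_inner_self_eq_norm_sq]
  simp only [PiLp.inner_apply, dotProduct]
  simp [sq]

lemma eig_le {n : ℕ} {M : Matrix (Fin n) (Fin n) ℝ} (hM : M.IsHermitian) {c : ℝ}
    (h : ∀ v : Fin n → ℝ, v ⬝ᵥ (M *ᵥ v) ≤ c * (v ⬝ᵥ v)) (i : Fin n) :
    hM.eigenvalues i ≤ c := by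
  have hv : (⇑(hM.eigenvectorBasis i) : Fin n → ℝ) ⬝ᵥ ⇑(hM.eigenvectorBasis i) = 1 := by
    have h1 : ‖hM.eigenvectorBasis i‖ = 1 := hM.eigenvectorBasis.orthonormal.1 i
    have h2 := dot_self_norm (⇑(hM.eigenvectorBasis i))
    have h3 : (EuclideanSpace.equiv (Fin n) ℝ).symm (⇑(hM.eigenvectorBasis i))
        = hM.eigenvectorBasis i := rfl
    rw [h2, h3, h1]; norm_num
  have heq := hM.eigenvalues_eq i
  simp only [RCLike.re_to_real] at heq
  rw [heq]
  have hs : star (⇑(hM.eigenvectorBasis i) : Fin n → ℝ) = ⇑(hM.eigenvectorBasis i) := by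
    simp [star_trivial]
  rw [hs]
  calc (⇑(hM.eigenvectorBasis i) : Fin n → ℝ) ⬝ᵥ (M *ᵥ ⇑(hM.eigenvectorBasis i))
      ≤ c * ((⇑(hM.eigenvectorBasis i) : Fin n → ℝ) ⬝ᵥ ⇑(hM.eigenvectorBasis i)) := h _
    _ = c := by rw [hv, mul_one]

lemma det_le_pow {n : ℕ} {M : Matrix (Fin n) (Fin n) ℝ} (hM : M.PosSemidef) {c : ℝ}
    (h : ∀ v : Fin n → ℝ, v ⬝ᵥ (M *ᵥ v) ≤ c * (v ⬝ᵥ v)) : M.det ≤ c ^ n := by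
  have hd := hM.1.det_eq_prod_eigenvalues
  push_cast at hd
  rw [hd]
  calc ∏ i, hM.1.eigenvalues i ≤ ∏ _i : Fin n, c :=
        Finset.prod_le_prod (fun i _ => hM.eigenvalues_nonneg i) (fun i _ => eig_le hM.1 h i)
    _ = c ^ n := by simp

lemma trace_eq_sum_eig {n : ℕ} {M : Matrix (Fin n) (Fin n) ℝ} (hM : M.IsHermitian) :
    M.trace = ∑ i, hM.eigenvalues i := by
  conv_lhs => rw [hM.spectral_theorem, Unitary.conjStarAlgAut_apply]
  rw [Matrix.trace_mul_cycle]
  have h1 : (star (hM.eigenvectorUnitary : Matrix (Fin n) (Fin n) ℝ)) *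
      (hM.eigenvectorUnitary : Matrix (Fin n) (Fin n) ℝ) = 1 := by
    exact_mod_cast Unitary.star_mul_self_of_mem (hM.eigenvectorUnitary).2
  rw [h1, Matrix.one_mul, Matrix.trace_diagonal]
  simp

lemma diag_pos {n : ℕ} {S : Matrix (Fin n) (Fin n) ℝ} (hS : S.PosDef) (i : Fin n) :
    0 < S i i := by
  exact hS.diag_pos

lemma hadamard_posDef {n : ℕ} {S : Matrix (Fin n) (Fin n) ℝ} (hS : S.PosDef) :
    S.det ≤ ∏ i, S i i := by
  rcases Nat.eq_zero_or_pos n with hn | hn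
  · subst hn; simp [Matrix.det_fin_zero]
  have hn' : (n : ℝ) ≠ 0 := Nat.cast_ne_zero.2 hn.ne'
  set g : Fin n → ℝ := fun i => (Real.sqrt (S i i))⁻¹ with hg
  have hgpos : ∀ i, 0 < g i := fun i => inv_pos.2 (Real.sqrt_pos.2 (diag_pos hS i))
  set E : Matrix (Fin n) (Fin n) ℝ := Matrix.diagonal g with hE
  have hEH : Eᴴ = E := by
    simp [hE, Matrix.diagonal_conjTranspose]
  have hM : (E * S * E).PosSemidef := by
    have := hS.posSemidef.conjTranspose_mul_mul_same E
    rwa [hEH] at this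
  set M := E * S * E with hMdef
  have hdiag : ∀ i, M i i = 1 := by
    intro i
    have h4 : M i i = g i * S i i * g i := by
      simp [hMdef, hE, Matrix.mul_apply, Matrix.diagonal_apply, Finset.sum_ite_eq,
        Finset.sum_ite_eq']
    rw [h4, hg]
    have h1 : Real.sqrt (S i i) ≠ 0 := (Real.sqrt_pos.2 (diag_pos hS i)).ne'
    have h2 : Real.sqrt (S i i) * Real.sqrt (S i i) = S i i :=
      Real.mul_self_sqrt (diag_pos hS i).le
    field_simp
    exact (Real.sq_sqrt (diag_pos hS i).le).symm
  have htrace : M.trace = (n : ℝ) := by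
    rw [Matrix.trace]; simp only [Matrix.diag]
    rw [Finset.sum_congr rfl (fun i _ => hdiag i)]; simp
  have hsum : ∑ i, hM.1.eigenvalues i = (n : ℝ) := by
    rw [← trace_eq_sum_eig hM.1, htrace]
  have hprodle : ∏ i, hM.1.eigenvalues i ≤ 1 := by
    have amgm := Real.geom_mean_le_arith_mean_weighted Finset.univ (fun _ => (n : ℝ)⁻¹)
      hM.1.eigenvalues (fun _ _ => by positivity)
      (by simp [Finset.sum_const]; field_simp)
      (fun i _ => hM.eigenvalues_nonneg i)
    have hsum' : ∑ i, (n : ℝ)⁻¹ * hM.1.eigenvalues i = 1 := by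
      rw [← Finset.mul_sum, hsum]; field_simp
    rw [hsum'] at amgm
    have hprod : ∏ i, hM.1.eigenvalues i ^ ((n : ℝ)⁻¹)
        = (∏ i, hM.1.eigenvalues i) ^ ((n : ℝ)⁻¹) := by
      rw [← Real.finset_prod_rpow _ _ (fun i _ => hM.eigenvalues_nonneg i)]
    rw [hprod] at amgm
    have h0 : (0 : ℝ) ≤ ∏ i, hM.1.eigenvalues i :=
      Finset.prod_nonneg (fun i _ => hM.eigenvalues_nonneg i)
    calc ∏ i, hM.1.eigenvalues i
        = ((∏ i, hM.1.eigenvalues i) ^ ((n : ℝ)⁻¹)) ^ (n : ℕ) := by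
          rw [← Real.rpow_natCast ((∏ i, hM.1.eigenvalues i) ^ ((n : ℝ)⁻¹)) n,
            ← Real.rpow_mul h0, inv_mul_cancel₀ hn', Real.rpow_one]
      _ ≤ 1 ^ (n : ℕ) := pow_le_pow_left₀ (Real.rpow_nonneg h0 _) amgm n
      _ = 1 := one_pow n
  have hdet : M.det ≤ 1 := by
    have h5 := hM.1.det_eq_prod_eigenvalues
    push_cast at h5
    rw [h5]; exact hprodle
  have hdetM : M.det = (∏ i, g i) ^ 2 * S.det := by
    rw [hMdef, Matrix.det_mul, Matrix.det_mul, hE, Matrix.det_diagonal]; ring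
  have hgp : 0 < ∏ i, g i := Finset.prod_pos (fun i _ => hgpos i)
  have hfinal : S.det ≤ ((∏ i, g i) ^ 2)⁻¹ := by
    have h2 : (0 : ℝ) < (∏ i, g i) ^ 2 := by positivity
    rw [hdetM] at hdet
    calc S.det = ((∏ i, g i) ^ 2)⁻¹ * ((∏ i, g i) ^ 2 * S.det) := by
          field_simp
      _ ≤ ((∏ i, g i) ^ 2)⁻¹ * 1 := mul_le_mul_of_nonneg_left hdet (by positivity)
      _ = ((∏ i, g i) ^ 2)⁻¹ := mul_one _
  have hprodg : ((∏ i, g i) ^ 2)⁻¹ = ∏ i, S i i := by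
    rw [← Finset.prod_pow, ← Finset.prod_inv_distrib]
    refine Finset.prod_congr rfl fun i _ => ?_
    rw [hg]
    rw [inv_pow, inv_inv, Real.sq_sqrt (diag_pos hS i).le]
  rwa [hprodg] at hfinal

lemma mulVec_dot_le {n : ℕ} (B : Matrix (Fin n) (Fin n) ℝ) (v : Fin n → ℝ) :
    (B *ᵥ v) ⬝ᵥ (B *ᵥ v) ≤ ‖B‖ ^ 2 * (v ⬝ᵥ v) := by
  rw [dot_self_norm, dot_self_norm]
  have h := B.l2_opNorm_mulVec ((EuclideanSpace.equiv (Fin n) ℝ).symm v)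
  have hx : ((EuclideanSpace.equiv (Fin n) ℝ).symm v : EuclideanSpace ℝ (Fin n))
      = (EuclideanSpace.equiv (Fin n) ℝ).symm v := rfl
  have h2 : ‖(EuclideanSpace.equiv (Fin n) ℝ).symm (B *ᵥ v)‖
      ≤ ‖B‖ * ‖(EuclideanSpace.equiv (Fin n) ℝ).symm v‖ := h
  have h0 : (0:ℝ) ≤ ‖(EuclideanSpace.equiv (Fin n) ℝ).symm (B *ᵥ v)‖ := norm_nonneg _
  nlinarith [norm_nonneg ((EuclideanSpace.equiv (Fin n) ℝ).symm v), norm_nonneg B]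

end Aux

theorem det_bound_posdef_nonsymmetric (n : ℕ) (A : Matrix (Fin n) (Fin n) ℝ)
    (hSym : (symPart A).PosDef) :
    A.det ≤ ((opNorm (skewPart A) * opNorm (symPart A)⁻¹) ^ 2 + 1) ^ ((n : ℝ) / 2) *
      ∏ i, A i i := by
  classical
  set S := symPart A with hSdef
  set K := skewPart A with hKdef
  have hASK : A = S + K := by
    ext i j
    simp [hSdef, hKdef, symPart, skewPart, Matrix.add_apply, Matrix.smul_apply]
    ring
  have hKT : Kᵀ = -K := by
    ext i j
    simp [hKdef, skewPart, Matrix.smul_apply]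
    ring
  have hdiagA : ∀ i, S i i = A i i := by
    intro i
    simp [hSdef, symPart, Matrix.smul_apply]
    ring
  -- square root of S
  set R := CFC.sqrt S with hRdef
  have hRR : R * R = S := CFC.sqrt_mul_sqrt_self S hSym.posSemidef.nonneg
  have hRH : R.IsHermitian := (CFC.sqrt_nonneg S).posSemidef.1
  have hdetS : 0 < S.det := hSym.det_pos
  have hdetR : R.det ≠ 0 := by
    intro h
    rw [← hRR, Matrix.det_mul, h, mul_zero] at hdetS
    exact lt_irrefl _ hdetS
  have hRinv : R * R⁻¹ = 1 := Matrix.mul_nonsing_inv R (isUnit_iff_ne_zero.2 hdetR)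
  have hinvR : R⁻¹ * R = 1 := Matrix.nonsing_inv_mul R (isUnit_iff_ne_zero.2 hdetR)
  set B := R⁻¹ * K * R⁻¹ with hBdef
  -- A = R * (1 + B) * R
  have hfact : A = R * (1 + B) * R := by
    rw [hBdef]
    rw [Matrix.mul_add, Matrix.mul_one]
    rw [← Matrix.mul_assoc R (R⁻¹ * K) R⁻¹, ← Matrix.mul_assoc R R⁻¹ K, hRinv, Matrix.one_mul]
    rw [Matrix.add_mul, hRR, Matrix.mul_assoc K R⁻¹ R, hinvR, Matrix.mul_one]
    exact hASK
  have hdetA : A.det = S.det * (1 + B).det := by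
    rw [hfact, Matrix.det_mul, Matrix.det_mul, ← hRR, Matrix.det_mul]; ring
  -- B is skew
  have hRT : Rᵀ = R := by
    rw [← real_conjTranspose_eq_transpose]; exact hRH
  have hRinvT : R⁻¹ᵀ = R⁻¹ := by
    rw [Matrix.transpose_nonsing_inv, hRT]
  have hBT : Bᵀ = -B := by
    rw [hBdef, Matrix.transpose_mul, Matrix.transpose_mul, hRinvT, hKT]
    simp [Matrix.neg_mul, Matrix.mul_neg, Matrix.mul_assoc]
  -- norm bound on B
  set c := opNorm K * opNorm S⁻¹ with hcdef
  have hc0 : 0 ≤ c := mul_nonneg (norm_nonneg _) (norm_nonneg _)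
  have hRinv2 : R⁻¹ * R⁻¹ = S⁻¹ := by
    rw [← Matrix.mul_inv_rev, hRR]
  have hnormB : ‖B‖ ≤ c := by
    have h1 : ‖B‖ ≤ ‖R⁻¹ * K‖ * ‖R⁻¹‖ := Matrix.l2_opNorm_mul _ _
    have h2 : ‖R⁻¹ * K‖ ≤ ‖R⁻¹‖ * ‖K‖ := Matrix.l2_opNorm_mul _ _
    have h3 : ‖R⁻¹‖ * ‖R⁻¹‖ = ‖S⁻¹‖ := by
      have h4 : (R⁻¹)ᴴ * R⁻¹ = S⁻¹ := by
        rw [real_conjTranspose_eq_transpose, hRinvT, hRinv2]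
      calc ‖R⁻¹‖ * ‖R⁻¹‖ = ‖(R⁻¹)ᴴ * R⁻¹‖ := (Matrix.l2_opNorm_conjTranspose_mul_self _).symm
        _ = ‖S⁻¹‖ := by rw [h4]
    rw [hcdef, opNorm_eq_norm, opNorm_eq_norm]
    calc ‖B‖ ≤ ‖R⁻¹ * K‖ * ‖R⁻¹‖ := h1
      _ ≤ ‖R⁻¹‖ * ‖K‖ * ‖R⁻¹‖ :=
          mul_le_mul_of_nonneg_right h2 (norm_nonneg _)
      _ = ‖K‖ * (‖R⁻¹‖ * ‖R⁻¹‖) := by ring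
      _ = ‖K‖ * ‖S⁻¹‖ := by rw [h3]
  -- the matrix 1 + B * Bᵀ
  set M := (1 : Matrix (Fin n) (Fin n) ℝ) + B * Bᵀ with hMdef
  have hMpsd : M.PosSemidef := by
    have h1 : (B * Bᵀ).PosSemidef := by
      have := Matrix.posSemidef_self_mul_conjTranspose B
      rwa [real_conjTranspose_eq_transpose] at this
    have h2 : (1 : Matrix (Fin n) (Fin n) ℝ).PosSemidef := Matrix.PosSemidef.one
    exact h2.add h1
  have hquad : ∀ v : Fin n → ℝ, v ⬝ᵥ (M *ᵥ v) ≤ (c ^ 2 + 1) * (v ⬝ᵥ v) := by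
    intro v
    have hv0 : 0 ≤ v ⬝ᵥ v := by
      rw [dot_self_norm]; positivity
    have h1 : v ⬝ᵥ (M *ᵥ v) = v ⬝ᵥ v + (Bᵀ *ᵥ v) ⬝ᵥ (Bᵀ *ᵥ v) := by
      rw [hMdef, Matrix.add_mulVec, Matrix.one_mulVec, dotProduct_add]
      congr 1
      rw [← Matrix.mulVec_mulVec, Matrix.dotProduct_mulVec, ← Matrix.mulVec_transpose]
    rw [h1]
    have h2 : (Bᵀ *ᵥ v) ⬝ᵥ (Bᵀ *ᵥ v) ≤ ‖Bᵀ‖ ^ 2 * (v ⬝ᵥ v) := mulVec_dot_le Bᵀ v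
    have h3 : ‖Bᵀ‖ = ‖B‖ := by
      rw [← real_conjTranspose_eq_transpose]
      exact Matrix.l2_opNorm_conjTranspose B
    have h4 : ‖B‖ ^ 2 ≤ c ^ 2 := by
      have := norm_nonneg B
      nlinarith
    rw [h3] at h2
    have h5 : ‖B‖ ^ 2 * (v ⬝ᵥ v) ≤ c ^ 2 * (v ⬝ᵥ v) :=
      mul_le_mul_of_nonneg_right h4 hv0
    linarith
  have hdetM : M.det ≤ (c ^ 2 + 1) ^ n := det_le_pow hMpsd hquad
  -- det (1 + B) squared
  have hsq : (1 + B).det ^ 2 = M.det := by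
    have h1 : (1 + B) * (1 + B)ᵀ = M := by
      rw [hMdef, Matrix.transpose_add, Matrix.transpose_one, hBT]
      noncomm_ring
    calc (1 + B).det ^ 2 = (1 + B).det * (1 + B)ᵀ.det := by
          rw [Matrix.det_transpose]; ring
      _ = ((1 + B) * (1 + B)ᵀ).det := (Matrix.det_mul _ _).symm
      _ = M.det := by rw [h1]
  set d := (1 + B).det with hddef
  have hbound : d ≤ (c ^ 2 + 1) ^ ((n : ℝ) / 2) := by
    have h0 : (0:ℝ) ≤ c ^ 2 + 1 := by positivity
    have h1 : d ^ 2 ≤ (c ^ 2 + 1) ^ n := by rw [hsq]; exact hdetM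
    have h2 : d ≤ Real.sqrt ((c ^ 2 + 1) ^ n) := by
      calc d ≤ |d| := le_abs_self d
        _ = Real.sqrt (d ^ 2) := (Real.sqrt_sq_eq_abs d).symm
        _ ≤ Real.sqrt ((c ^ 2 + 1) ^ n) := Real.sqrt_le_sqrt h1
    have h3 : Real.sqrt ((c ^ 2 + 1) ^ n) = (c ^ 2 + 1) ^ ((n : ℝ) / 2) := by
      rw [Real.sqrt_eq_rpow, ← Real.rpow_natCast (c ^ 2 + 1) n, ← Real.rpow_mul h0]
      congr 1
      ring
    rwa [h3] at h2
  -- Hadamard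
  have hHad : S.det ≤ ∏ i, A i i := by
    calc S.det ≤ ∏ i, S i i := hadamard_posDef hSym
      _ = ∏ i, A i i := Finset.prod_congr rfl (fun i _ => hdiagA i)
  have hP : 0 < ∏ i, A i i := by
    apply Finset.prod_pos
    intro i _
    rw [← hdiagA i]
    exact diag_pos hSym i
  have hrpow : 0 < (c ^ 2 + 1 : ℝ) ^ ((n : ℝ) / 2) :=
    Real.rpow_pos_of_pos (by positivity) _
  rw [hdetA]
  rcases le_or_gt d 0 with hd | hd
  · calc S.det * d ≤ 0 := mul_nonpos_of_nonneg_of_nonpos hdetS.le hd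
      _ ≤ (c ^ 2 + 1) ^ ((n : ℝ) / 2) * ∏ i, A i i := by positivity
  · calc S.det * d ≤ (∏ i, A i i) * ((c ^ 2 + 1) ^ ((n : ℝ) / 2)) :=
        mul_le_mul hHad hbound hd.le hP.le
      _ = (c ^ 2 + 1) ^ ((n : ℝ) / 2) * ∏ i, A i i := by ring
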